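/- Let m ≥ 4 be an even integer, n = 2^m − 1, and c an integer with 1 ≤ c ≤ m/2 − 1. Then 2^{m−1} − 2^{m/2+c−1} ≥ n/2 − 2^{c−1}√n, and consequently A(n, d) ≥ n^c for any integer d ≤ n/2 − 2^{c−1}√n with d ≥ 1; i.e., there exists a subset C ⊆ F_2^n with |C| ≥ n^c such that any two distinct elements of C have Hamming distance at least d. -/

import Mathlib

set_option maxHeartbeats 1000000
open Finset Polynomial


lemma fiber_card {V : Type*} [AddCommGroup V] [Module (ZMod 2) V] [Fintype V] [DecidableEq V]
    (ψ : V →ₗ[ZMod 2] ZMod 2) (hψ : ψ ≠ 0) :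
    2 * (Finset.univ.filter fun β => ψ β = 1).card = Fintype.card V := by
  have hz2 : ∀ x : ZMod 2, x ≠ 0 → x = 1 := by decide
  obtain ⟨β₀, hβ₀⟩ : ∃ β, ψ β ≠ 0 := by
    by_contra h
    push_neg at h
    exact hψ (LinearMap.ext fun x => h x)
  have hβ₀1 : ψ β₀ = 1 := hz2 _ hβ₀
  have hself : ∀ v : V, v + β₀ + β₀ = v := by
    intro v
    have : β₀ + β₀ = 0 := by
      have := two_smul (ZMod 2) β₀
      rw [show (2 : ZMod 2) = 0 from rfl, zero_smul] at this
      exact this.symm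
    rw [add_assoc, this, add_zero]
  have hcard : (Finset.univ.filter fun β => ψ β = 0).card
      = (Finset.univ.filter fun β => ψ β = 1).card := by
    refine Finset.card_bij' (fun β _ => β + β₀) (fun β _ => β + β₀) ?_ ?_ ?_ ?_
    · intro a ha
      simp only [Finset.mem_filter, Finset.mem_univ, true_and] at ha ⊢
      rw [map_add, ha, hβ₀1, zero_add]
    · intro a ha
      simp only [Finset.mem_filter, Finset.mem_univ, true_and] at ha ⊢
      rw [map_add, ha, hβ₀1]
      decide
    · intro a _; exact hself a
    · intro a _; exact hself a
  have hsum := Finset.card_filter_add_card_filter_not (s := (Finset.univ : Finset V))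
    (p := fun β => ψ β = 0)
  have hfe : (Finset.univ.filter fun β => ¬ ψ β = 0) = (Finset.univ.filter fun β => ψ β = 1) := by
    apply Finset.filter_congr
    intro x _
    constructor
    · exact hz2 _
    · intro h h0; rw [h0] at h; exact one_ne_zero h.symm
  rw [hfe, hcard, Finset.card_univ] at hsum
  omega


lemma root_count {K : Type*} [Field K] [Fintype K] [DecidableEq K] (k : ℕ) (u : Fin k → K)
    (hu : u ≠ 0) :
    (Finset.univ.filter fun α : K => ∑ i : Fin k, u i * α ^ (i : ℕ) = 0).card ≤ k - 1 := by
  obtain ⟨i₀, hi₀⟩ := Function.ne_iff.mp hu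
  simp only [Pi.zero_apply] at hi₀
  set p : Polynomial K := ∑ i : Fin k, Polynomial.C (u i) * Polynomial.X ^ (i : ℕ) with hp_def
  have hcoeff : p.coeff (i₀ : ℕ) = u i₀ := by
    rw [hp_def, Polynomial.finset_sum_coeff]
    rw [Finset.sum_eq_single i₀]
    · simp
    · intro b _ hb
      rw [Polynomial.coeff_C_mul, Polynomial.coeff_X_pow, if_neg, mul_zero]
      exact fun h => hb (Fin.ext h.symm)
    · simp
  have hp : p ≠ 0 := fun h => hi₀ (by rw [← hcoeff, h, Polynomial.coeff_zero])
  have hdeg : p.natDegree ≤ k - 1 := by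
    apply Polynomial.natDegree_sum_le_of_forall_le
    intro i _
    refine le_trans (Polynomial.natDegree_C_mul_le _ _) ?_
    rw [Polynomial.natDegree_X_pow]
    omega
  have hsub : (Finset.univ.filter fun α : K => ∑ i : Fin k, u i * α ^ (i : ℕ) = 0)
      ⊆ p.roots.toFinset := by
    intro α hα
    simp only [Finset.mem_filter, Finset.mem_univ, true_and] at hα
    rw [Multiset.mem_toFinset, Polynomial.mem_roots hp, Polynomial.IsRoot.def, hp_def,
      Polynomial.eval_finset_sum]
    simpa using hα
  calc _ ≤ p.roots.toFinset.card := Finset.card_le_card hsub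
    _ ≤ Multiset.card p.roots := p.roots.toFinset_card_le
    _ ≤ p.natDegree := p.card_roots'
    _ ≤ k - 1 := hdeg

lemma code_exists (s k : ℕ) (hs : 1 ≤ s) (hk : 1 ≤ k) (hks : k ≤ 2 ^ s)
    (K : Type*) [Field K] [Fintype K] [DecidableEq K] [Algebra (ZMod 2) K]
    (hKcard : Fintype.card K = 2 ^ s) :
    ∃ C : Finset (Fin (2 ^ (2 * s) - 1) → ZMod 2), C.card = (2 ^ s) ^ k ∧
      ∀ x ∈ C, ∀ y ∈ C, x ≠ y → (2 ^ s - (k - 1)) * 2 ^ (s - 1) ≤ hammingDist x y := by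
  haveI : FiniteDimensional (ZMod 2) K := Module.Finite.of_finite
  -- a nonzero linear functional
  have hrank : 0 < Module.finrank (ZMod 2) K := Module.finrank_pos
  set b := Module.finBasis (ZMod 2) K with hb_def
  set φ : K →ₗ[ZMod 2] ZMod 2 := b.coord ⟨0, hrank⟩ with hφ_def
  have hφ : φ ≠ 0 := by
    intro h
    have h1 : φ (b ⟨0, hrank⟩) = 1 := by
      rw [hφ_def, Module.Basis.coord_apply, Module.Basis.repr_self, Finsupp.single_eq_same]
    rw [h, LinearMap.zero_apply] at h1
    exact zero_ne_one h1
  -- fiber counts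
  have hfib : ∀ a : K, a ≠ 0 →
      (Finset.univ.filter fun β : K => φ (a * β) = 1).card = 2 ^ (s - 1) := by
    intro a ha
    set ψ : K →ₗ[ZMod 2] ZMod 2 := φ.comp (LinearMap.mulLeft (ZMod 2) a) with hψ_def
    have hψ : ψ ≠ 0 := by
      intro h
      apply hφ
      ext x
      have := LinearMap.congr_fun h (a⁻¹ * x)
      simpa [hψ_def, LinearMap.mulLeft_apply, ← mul_assoc, mul_inv_cancel₀ ha] using this
    have hfc := fiber_card ψ hψ
    rw [hKcard] at hfc
    have h2 : 2 ^ s = 2 * 2 ^ (s - 1) := by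
      rw [← pow_succ']
      congr 1
      omega
    have h3 : (Finset.univ.filter fun β : K => ψ β = 1).card = 2 ^ (s - 1) := by omega
    rw [← h3]
    congr 1
  -- the index equivalence
  have hcardI : Fintype.card {p : K × K // p ≠ ((0 : K), (0 : K))} = 2 ^ (2 * s) - 1 := by
    rw [Fintype.card_subtype_compl, Fintype.card_subtype_eq, Fintype.card_prod, hKcard,
      ← pow_add, show s + s = 2 * s from by omega]
  have e : Fin (2 ^ (2 * s) - 1) ≃ {p : K × K // p ≠ ((0 : K), (0 : K))} :=
    Fintype.equivOfCardEq (by rw [Fintype.card_fin, hcardI])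
  -- the code
  set ev : (Fin k → K) → K → K := fun v α => ∑ i : Fin k, v i * α ^ (i : ℕ) with hev_def
  set word : (Fin k → K) → Fin (2 ^ (2 * s) - 1) → ZMod 2 :=
    fun v j => φ (ev v (e j).val.1 * (e j).val.2) with hword_def
  have hdist : ∀ v w : Fin k → K, v ≠ w →
      (2 ^ s - (k - 1)) * 2 ^ (s - 1) ≤ hammingDist (word v) (word w) := by
    intro v w hvw
    set u := v - w with hu_def
    have hu : u ≠ 0 := sub_ne_zero.mpr hvw
    have hz2 : ∀ x y : ZMod 2, (x ≠ y) ↔ (x - y = 1) := by decide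
    have hevu : ∀ α : K, ev v α - ev w α = ev u α := by
      intro α
      rw [hev_def, hu_def]
      simp [sub_mul, Finset.sum_sub_distrib]
    have hkey : ∀ j, (word v j ≠ word w j) ↔ φ (ev u (e j).val.1 * (e j).val.2) = 1 := by
      intro j
      rw [hword_def, hz2, ← map_sub, ← sub_mul, hevu]
    have hdist_eq : hammingDist (word v) (word w)
        = (Finset.univ.filter fun j => φ (ev u (e j).val.1 * (e j).val.2) = 1).card := by
      unfold hammingDist
      congr 1
      apply Finset.filter_congr
      intro j _
      exact hkey j
    -- transfer to a count over K × K
    set N : Finset (K × K) := Finset.univ.filter fun p => φ (ev u p.1 * p.2) = 1 with hN_def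
    have hNcard : (Finset.univ.filter
        fun j => φ (ev u (e j).val.1 * (e j).val.2) = 1).card = N.card := by
      apply Finset.card_bij (fun j _ => (e j).val)
      · intro j hj
        simp only [Finset.mem_filter, Finset.mem_univ, true_and] at hj
        simp only [hN_def, Finset.mem_filter, Finset.mem_univ, true_and]
        exact hj
      · intro j₁ _ j₂ _ h
        exact e.injective (Subtype.ext h)
      · intro p hp
        simp only [hN_def, Finset.mem_filter, Finset.mem_univ, true_and] at hp
        have hp0 : p ≠ ((0 : K), (0 : K)) := by
          rintro rfl
          simp at hp
        refine ⟨e.symm ⟨p, hp0⟩, ?_, by rw [Equiv.apply_symm_apply]⟩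
        simp only [Finset.mem_filter, Finset.mem_univ, true_and, Equiv.apply_symm_apply]
        exact hp
    -- count N via fibers
    have hNsum : N.card = ∑ α : K, (Finset.univ.filter fun β : K => φ (ev u α * β) = 1).card := by
      rw [hN_def, Finset.card_filter]
      rw [Fintype.sum_prod_type]
      congr 1
      ext α
      rw [Finset.card_filter]
    set good : Finset K := Finset.univ.filter fun α : K => ev u α ≠ 0 with hgood_def
    have hgood_card : 2 ^ s - (k - 1) ≤ good.card := by
      have h1 := Finset.card_filter_add_card_filter_not
        (s := (Finset.univ : Finset K)) (p := fun α : K => ev u α = 0)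
      have h2 : (Finset.univ.filter fun α : K => ¬ ev u α = 0) = good := rfl
      have h3 := root_count k u hu
      rw [Finset.card_univ, hKcard] at h1
      rw [h2] at h1
      have h4 : (Finset.univ.filter fun α : K => ev u α = 0).card ≤ k - 1 := h3
      omega
    have hbound : (2 ^ s - (k - 1)) * 2 ^ (s - 1) ≤ N.card := by
      rw [hNsum]
      calc (2 ^ s - (k - 1)) * 2 ^ (s - 1) ≤ good.card * 2 ^ (s - 1) :=
            Nat.mul_le_mul_right _ hgood_card
        _ = ∑ α ∈ good, (Finset.univ.filter fun β : K => φ (ev u α * β) = 1).card := by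
            rw [Finset.sum_congr rfl fun α hα => hfib (ev u α)
              (by simpa [hgood_def] using hα), Finset.sum_const, smul_eq_mul]
        _ ≤ ∑ α : K, (Finset.univ.filter fun β : K => φ (ev u α * β) = 1).card :=
            Finset.sum_le_sum_of_subset (Finset.subset_univ good)
    rw [hdist_eq, hNcard]
    exact hbound
  -- injectivity
  have hpos : 0 < (2 ^ s - (k - 1)) * 2 ^ (s - 1) := by
    have : k - 1 < 2 ^ s := by omega
    have : 0 < 2 ^ s - (k - 1) := by omega
    positivity
  have hinj : Function.Injective word := by
    intro v w h
    by_contra hvw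
    have := hdist v w hvw
    rw [h, hammingDist_self] at this
    omega
  refine ⟨Finset.univ.image word, ?_, ?_⟩
  · rw [Finset.card_image_of_injective _ hinj, Finset.card_univ, Fintype.card_fun,
      Fintype.card_fin, hKcard]
  · intro x hx y hy hxy
    simp only [Finset.mem_image, Finset.mem_univ, true_and] at hx hy
    obtain ⟨v, rfl⟩ := hx
    obtain ⟨w, rfl⟩ := hy
    exact hdist v w (fun h => hxy (by rw [h]))

theorem lower_bound_A (m c n : ℕ) (hm : 4 ≤ m) (hme : Even m)
    (hc1 : 1 ≤ c) (hc2 : c ≤ m / 2 - 1) (hn : n = 2 ^ m - 1) :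
    ((2 : ℝ) ^ (m - 1) - 2 ^ (m / 2 + c - 1) ≥ (n : ℝ) / 2 - 2 ^ (c - 1) * Real.sqrt n) ∧
    (∀ d : ℕ, 1 ≤ d → (d : ℝ) ≤ (n : ℝ) / 2 - 2 ^ (c - 1) * Real.sqrt n →
      ∃ C : Finset (Fin n → ZMod 2), n ^ c ≤ C.card ∧
        ∀ x ∈ C, ∀ y ∈ C, x ≠ y → d ≤ hammingDist x y) := by
  subst hn
  obtain ⟨s, rfl⟩ := hme
  obtain ⟨c', rfl⟩ : ∃ c', c = c' + 1 := ⟨c - 1, by omega⟩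
  obtain ⟨t, rfl⟩ : ∃ t, s = t + 1 := ⟨s - 1, by omega⟩
  have hct : c' + 2 ≤ t + 1 := by
    have : (t + 1 + (t + 1)) / 2 = t + 1 := by omega
    omega
  have E1 : t + 1 + (t + 1) - 1 = 2 * t + 1 := by omega
  have E2 : (t + 1 + (t + 1)) / 2 + (c' + 1) - 1 = t + 1 + c' := by omega
  have E3 : c' + 1 - 1 = c' := by omega
  have E4 : t + 1 + (t + 1) = 2 * (t + 1) := by omega
  rw [E1, E2, E3, E4]
  -- real arithmetic facts
  set Q : ℝ := 2 ^ (t + 1) with hQ_def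
  have hQpos : (0 : ℝ) < Q := by positivity
  have hone : (1 : ℕ) ≤ 2 ^ (2 * (t + 1)) := Nat.one_le_two_pow
  have hncast : ((2 ^ (2 * (t + 1)) - 1 : ℕ) : ℝ) = Q ^ 2 - 1 := by
    rw [Nat.cast_sub hone, Nat.cast_pow, Nat.cast_one, hQ_def, ← pow_mul, Nat.cast_ofNat,
      mul_comm 2 (t + 1)]
  rw [hncast]
  set S : ℝ := Real.sqrt (Q ^ 2 - 1) with hS_def
  have hS0 : 0 ≤ S := Real.sqrt_nonneg _
  have hSsq : S ^ 2 = Q ^ 2 - 1 := by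
    rw [hS_def, Real.sq_sqrt]
    nlinarith
  set E : ℝ := 2 ^ c' with hE_def
  have hE0 : (0 : ℝ) < E := by positivity
  have hE1 : (1 : ℝ) ≤ E := one_le_pow₀ one_le_two
  have hQ1 : (1 : ℝ) ≤ Q := one_le_pow₀ one_le_two
  have hQ4E : 4 * E ≤ Q := by
    have : (2 : ℝ) ^ (c' + 2) ≤ 2 ^ (t + 1) := pow_le_pow_right₀ one_le_two hct
    rw [pow_add] at this
    nlinarith
  have hEc : (c' : ℝ) + 1 ≤ E := by
    have h : c' + 1 ≤ 2 ^ c' := (Nat.lt_two_pow_self (n := c'))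
    have h' : (c' : ℝ) + 1 ≤ 2 ^ c' := by exact_mod_cast h
    rw [hE_def]
    exact h'
  have hSQ1 : Q - 1 ≤ S := Real.le_sqrt_of_sq_le (by nlinarith)
  have hA : (2 : ℝ) ^ (2 * t + 1) * 2 = Q ^ 2 := by
    rw [← pow_succ, hQ_def, ← pow_mul]
    congr 1
    omega
  have hB : (2 : ℝ) ^ (t + 1 + c') = Q * E := by
    rw [pow_add]
  clear_value Q S E
  have hprod : (Q - S) * (Q + S) = 1 := by nlinarith
  have hQmS : 0 ≤ Q - S := by nlinarith
  have h7 : E * ((Q - S) * (Q + S)) = E := by rw [hprod, mul_one]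
  have h8 : 0 ≤ (E * (Q - S)) * (Q + S - 4 * E) :=
    mul_nonneg (mul_nonneg hE0.le hQmS) (by linarith)
  have h6 : E * (Q - S) ≤ 1 / 4 := by nlinarith [h7, h8, hE0]
  constructor
  · rw [ge_iff_le, hB]
    nlinarith [h6, hA]
  · intro d hd1 hd2
    haveI : Fact (Nat.Prime 2) := ⟨Nat.prime_two⟩
    haveI : Fintype (GaloisField 2 (t + 1)) := Fintype.ofFinite _
    haveI : DecidableEq (GaloisField 2 (t + 1)) := Classical.decEq _
    have hKcard : Fintype.card (GaloisField 2 (t + 1)) = 2 ^ (t + 1) := by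
      have := GaloisField.card 2 (t + 1) (by omega)
      rwa [Nat.card_eq_fintype_card] at this
    have ht2 : t < 2 ^ t := (Nat.lt_two_pow_self (n := t))
    obtain ⟨C, hCcard, hCdist⟩ := code_exists (t + 1) (2 * (c' + 1)) (by omega) (by omega)
      (by omega) (GaloisField 2 (t + 1)) hKcard
    refine ⟨C, ?_, ?_⟩
    · rw [hCcard]
      calc (2 ^ (2 * (t + 1)) - 1) ^ (c' + 1)
          ≤ (2 ^ (2 * (t + 1))) ^ (c' + 1) := Nat.pow_le_pow_left (Nat.sub_le _ _) _
        _ = (2 ^ (t + 1)) ^ (2 * (c' + 1)) := by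
            rw [← pow_mul, ← pow_mul]
            congr 1
            ring
    · intro x hx y hy hxy
      refine le_trans ?_ (hCdist x hx y hy hxy)
      have hsub : 2 * (c' + 1) - 1 = 2 * c' + 1 := by omega
      have hle : 2 * c' + 1 ≤ 2 ^ (t + 1) := by omega
      rw [hsub]
      have hcast : (((2 ^ (t + 1) - (2 * c' + 1)) * 2 ^ (t + 1 - 1) : ℕ) : ℝ)
          = (Q - (2 * c' + 1)) * (Q / 2) := by
        rw [Nat.cast_mul, Nat.cast_sub hle]
        push_cast
        rw [hQ_def, pow_succ]
        ring
      have hreal : (d : ℝ) ≤ (((2 ^ (t + 1) - (2 * c' + 1)) * 2 ^ (t + 1 - 1) : ℕ) : ℝ) := by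
        rw [hcast]
        refine le_trans hd2 ?_
        nlinarith [mul_le_mul_of_nonneg_left hSQ1 hE0.le,
          mul_nonneg (show (0:ℝ) ≤ 2 * E - 2 * (c' : ℝ) - 2 by linarith) hQpos.le,
          hQ4E, hE0, hQpos]
      exact_mod_cast hreal
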